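/- With Ĝ_n and t_n as in the binary-tree construction: Z(Ĝ_n) ≥ t_n + 1, and consequently Z(Ĝ_n) ≥ (4/9)·|V(Ĝ_n)|; more precisely Z(Ĝ_n) ≥ (4/9 + 1/(18·4^{n−1}))·|V(Ĝ_n)| for all n ≥ 1. -/

import Mathlib

/-- The zero forcing closure: vertices that eventually become black when the
vertices of `S` are initially black and we repeatedly apply the rule that a
white vertex `u` becomes black if it is the unique white neighbor of some black
vertex `v` (we say `v` forces `u`). -/
inductive ZFClosure {V : Type*} (G : SimpleGraph V) (S : Set V) : V → Prop
  | init (v : V) : v ∈ S → ZFClosure G S v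
  | force (u v : V) : G.Adj v u → ZFClosure G S v →
      (∀ w, G.Adj v w → w ≠ u → ZFClosure G S w) → ZFClosure G S u

/-- `S` is a zero forcing set of `G` if every vertex eventually becomes black. -/
def IsZeroForcingSet {V : Type*} (G : SimpleGraph V) (S : Set V) : Prop :=
  ∀ v, ZFClosure G S v

/-- The zero forcing number `Z(G)`: the minimum cardinality of a zero forcing set. -/
noncomputable def zeroForcingNumber {V : Type*} (G : SimpleGraph V) : ℕ :=
  sInf {k | ∃ S : Set V, S.ncard = k ∧ IsZeroForcingSet G S}

/-- One-sided edge relation of the subdivided `K₄`: vertices `a b c d e = 0 1 2 3 4`,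
edges `ad, db, ac, cb, ae, eb, ce`; here `d = 3` is the subdivision vertex. -/
def subK4Rel : Fin 5 → Fin 5 → Prop := fun x y =>
  (x, y) ∈ [((0 : Fin 5), (3 : Fin 5)), (3, 1), (0, 2), (2, 1), (0, 4), (4, 1), (2, 4)]

/-- The subdivided `K₄`: the complete graph on `{a, b, c, e}` with the edge `ab`
replaced by the path `a–d–b`. -/
def subK4 : SimpleGraph (Fin 5) := SimpleGraph.fromRel subK4Rel

/-- Vertices of the graph `G_{n+1}` of the binary-tree construction: `GV n` is
obtained from the complete binary tree `B_{2(n+1)-1}` by replacing every leaf with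
a subdivided `K₄` (attached via its subdivision vertex `3`).  `GV 0` is a single
subdivided `K₄`; `GV (n+1)` consists of a root, two middle vertices `mid b`
(the vertices `y_n^1, y_n^2`), and four copies `child b c` of `GV n`. -/
inductive GV : ℕ → Type
  | base : Fin 5 → GV 0
  | root {n : ℕ} : GV (n + 1)
  | mid {n : ℕ} : Bool → GV (n + 1)
  | child {n : ℕ} : Bool → Bool → GV n → GV (n + 1)

/-- The root `r_{n+1}` of `G_{n+1}` (for a single subdivided `K₄` it is the
subdivision vertex `3`). -/
def rootV : (n : ℕ) → GV n
  | 0 => .base 3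
  | _ + 1 => .root

/-- One-sided edge relation of `G_{n+1}`: the root is joined to the two middle
vertices, each middle vertex is joined to the roots of its two copies of the
previous construction, and each copy keeps its own edges. -/
def gAdj : {n : ℕ} → GV n → GV n → Prop
  | 0, .base i, .base j => subK4Rel i j
  | _ + 1, .root, .mid _ => True
  | n + 1, .mid b, .child b' _ x => b = b' ∧ x = rootV n
  | _ + 1, .child b c x, .child b' c' y => b = b' ∧ c = c' ∧ gAdj x y
  | _ + 1, _, _ => False

/-- The graph `G_{n+1}` of the binary-tree construction (the complete binary tree
`B_{2(n+1)-1}` with every leaf replaced by a subdivided `K₄`). -/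
def Gtree (n : ℕ) : SimpleGraph (GV n) := SimpleGraph.fromRel gAdj

/-- One-sided edge relation of `Ĝ_{n+1}`: `G_{n+1}` together with one extra pendant
vertex `none` (the vertex `y_{n+1}`) attached to the root. -/
def hatAdj (n : ℕ) : Option (GV n) → Option (GV n) → Prop
  | some x, some y => gAdj x y
  | none, some x => x = rootV n
  | _, _ => False

/-- The graph `Ĝ_{n+1}`: `G_{n+1}` with a new pendant vertex attached to the root. -/
def hatGtree (n : ℕ) : SimpleGraph (Option (GV n)) := SimpleGraph.fromRel (hatAdj n)

/-- The sequence `t_{n+1}` (0-indexed): `t 0 = t_1 = 2` and `t (n+1) = 4 * t n + 2`. -/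
def tseq : ℕ → ℕ
  | 0 => 2
  | n + 1 => 4 * tseq n + 2


/-! ### Fort machinery -/

/-- The fort condition: every vertex outside `F` that has a neighbor in `F`
has a second neighbor in `F`. -/
def FortCond {V : Type*} (G : SimpleGraph V) (F : Set V) : Prop :=
  ∀ v ∉ F, ∀ u ∈ F, G.Adj v u → ∃ w ∈ F, w ≠ u ∧ G.Adj v w

lemma fort_block {V : Type*} {G : SimpleGraph V} {S F : Set V}
    (hF : FortCond G F) (hdisj : Disjoint F S) :
    ∀ v, ZFClosure G S v → v ∉ F := by
  intro v hv
  induction hv with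
  | init v hv => exact fun hvF => (Set.disjoint_left.1 hdisj) hvF hv
  | force u v hadj hv hall ihv ihall =>
    intro huF
    obtain ⟨w, hwF, hwu, hvw⟩ := hF v ihv u huF hadj
    exact ihall w hvw hwu hwF

lemma not_zfs {V : Type*} {G : SimpleGraph V} {S F : Set V}
    (hF : FortCond G F) (hne : F.Nonempty) (hdisj : Disjoint F S) :
    ¬ IsZeroForcingSet G S := by
  intro h
  obtain ⟨v, hv⟩ := hne
  exact fort_block hF hdisj v (h v) hv

/-! ### Finiteness and cardinality of `GV n` -/

def gvEquiv0 : GV 0 ≃ Fin 5 where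
  toFun := fun x => match x with | .base i => i
  invFun := .base
  left_inv := fun x => by cases x <;> rfl
  right_inv := fun i => rfl

def gvEquivS (n : ℕ) : GV (n + 1) ≃ (Unit ⊕ Bool ⊕ Bool × Bool × GV n) where
  toFun := fun x => match x with
    | .root => Sum.inl ()
    | .mid b => Sum.inr (Sum.inl b)
    | .child b c x => Sum.inr (Sum.inr (b, c, x))
  invFun := fun x => match x with
    | Sum.inl _ => .root
    | Sum.inr (Sum.inl b) => .mid b
    | Sum.inr (Sum.inr (b, c, x)) => .child b c x
  left_inv := fun x => by cases x <;> rfl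
  right_inv := fun x => by rcases x with _ | (_ | ⟨b, c, x⟩) <;> rfl

noncomputable def gvFintype : ∀ n, Fintype (GV n)
  | 0 => Fintype.ofEquiv _ gvEquiv0.symm
  | n + 1 => letI := gvFintype n; Fintype.ofEquiv _ (gvEquivS n).symm

noncomputable instance (n : ℕ) : Fintype (GV n) := gvFintype n

instance (n : ℕ) : Finite (GV n) := Finite.of_fintype _

lemma card_gv (n : ℕ) : Nat.card (GV n) = 6 * 4 ^ n - 1 := by
  induction n with
  | zero => rw [Nat.card_congr gvEquiv0]; simp
  | succ n ih =>
    have h1 : Nat.card (GV (n+1)) = 1 + (2 + 2 * 2 * Nat.card (GV n)) := by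
      rw [Nat.card_congr (gvEquivS n)]
      simp [Nat.card_sum, Nat.card_prod]; ring
    have h2 : 1 ≤ 6 * 4 ^ n := Nat.one_le_iff_ne_zero.2 (by positivity)
    rw [h1, ih]
    rw [pow_succ]
    omega

lemma card_option_gv (n : ℕ) : Nat.card (Option (GV n)) = 6 * 4 ^ n := by
  have h2 : 1 ≤ 6 * 4 ^ n := Nat.one_le_iff_ne_zero.2 (by positivity)
  rw [Nat.card_eq_fintype_card, Fintype.card_option, ← Nat.card_eq_fintype_card, card_gv]
  omega

/-! ### Adjacency lemmas -/

@[simp] lemma gAdj_child_root {n : ℕ} {b c : Bool} {x : GV n} :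
    gAdj (GV.child b c x) GV.root = False := rfl
@[simp] lemma gAdj_root_child {n : ℕ} {b c : Bool} {x : GV n} :
    gAdj GV.root (GV.child b c x) = False := rfl
@[simp] lemma gAdj_child_mid' {n : ℕ} {b c b' : Bool} {x : GV n} :
    gAdj (GV.child b c x) (GV.mid b') = False := rfl
@[simp] lemma gAdj_mid_root {n : ℕ} {b : Bool} :
    gAdj (GV.mid b) (GV.root : GV (n+1)) = False := rfl
@[simp] lemma gAdj_mid_mid {n : ℕ} {b b' : Bool} :
    gAdj (GV.mid b) (GV.mid b' : GV (n+1)) = False := rfl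
@[simp] lemma gAdj_root_root {n : ℕ} :
    gAdj (GV.root : GV (n+1)) GV.root = False := rfl
@[simp] lemma gAdj_child_child' {n : ℕ} {b c b' c' : Bool} {x y : GV n} :
    gAdj (GV.child b c x) (GV.child b' c' y) = (b = b' ∧ c = c' ∧ gAdj x y) := rfl
@[simp] lemma gAdj_mid_child' {n : ℕ} {b c b' : Bool} {x : GV n} :
    gAdj (GV.mid b') (GV.child b c x) = (b' = b ∧ x = rootV n) := rfl
@[simp] lemma gAdj_root_mid {n : ℕ} {b : Bool} :
    gAdj (GV.root : GV (n+1)) (GV.mid b) = True := rfl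

lemma gtree_adj {n : ℕ} {x y : GV n} :
    (Gtree n).Adj x y ↔ x ≠ y ∧ (gAdj x y ∨ gAdj y x) := by
  simp [Gtree, SimpleGraph.fromRel_adj]

lemma adj_base {i j : Fin 5} :
    (Gtree 0).Adj (.base i) (.base j) ↔ i ≠ j ∧ (subK4Rel i j ∨ subK4Rel j i) := by
  rw [gtree_adj]
  simp only [ne_eq, GV.base.injEq]
  rfl

lemma adj_child_child {n : ℕ} {b c b' c' : Bool} {x y : GV n} :
    (Gtree (n+1)).Adj (.child b c x) (.child b' c' y) ↔
      b = b' ∧ c = c' ∧ (Gtree n).Adj x y := by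
  rw [gtree_adj, gtree_adj]
  constructor
  · rintro ⟨hne, (⟨hb, hc, h⟩ | ⟨hb, hc, h⟩)⟩
    · subst hb; subst hc
      exact ⟨rfl, rfl, fun hxy => hne (by rw [hxy]), Or.inl h⟩
    · subst hb; subst hc
      exact ⟨rfl, rfl, fun hxy => hne (by rw [hxy]), Or.inr h⟩
  · rintro ⟨rfl, rfl, hne, h⟩
    refine ⟨fun hc => hne ?_, ?_⟩
    · simp only [GV.child.injEq] at hc
      exact hc.2.2
    · rcases h with h | h
      · exact Or.inl (by simp [h])
      · exact Or.inr (by simp [h])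

lemma adj_child_mid {n : ℕ} {b c b' : Bool} {x : GV n} :
    (Gtree (n+1)).Adj (.child b c x) (.mid b') ↔ b' = b ∧ x = rootV n := by
  rw [gtree_adj]
  constructor
  · rintro ⟨hne, h | h⟩
    · simp at h
    · exact h
  · rintro ⟨rfl, rfl⟩
    exact ⟨by simp, Or.inr (by simp)⟩

lemma adj_mid_child {n : ℕ} {b c b' : Bool} {x : GV n} :
    (Gtree (n+1)).Adj (.mid b') (.child b c x) ↔ b' = b ∧ x = rootV n := by
  rw [(Gtree (n+1)).adj_comm, adj_child_mid]

lemma not_adj_child_root {n : ℕ} {b c : Bool} {x : GV n} :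
    ¬ (Gtree (n+1)).Adj (.child b c x) .root := by
  rw [gtree_adj]
  rintro ⟨hne, h | h⟩ <;> simp at h

lemma adj_root_mid {n : ℕ} {b : Bool} : (Gtree (n+1)).Adj .root (.mid b) := by
  rw [gtree_adj]
  exact ⟨by simp, Or.inl trivial⟩

lemma not_adj_mid_mid {n : ℕ} {b b' : Bool} : ¬ (Gtree (n+1)).Adj (.mid b) (.mid b') := by
  rw [gtree_adj]
  rintro ⟨hne, h | h⟩ <;> simp at h

@[simp] lemma hatAdj_some_some {n : ℕ} {x y : GV n} :
    hatAdj n (some x) (some y) = gAdj x y := rfl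
@[simp] lemma hatAdj_none_some {n : ℕ} {x : GV n} :
    hatAdj n none (some x) = (x = rootV n) := rfl
@[simp] lemma hatAdj_some_none {n : ℕ} {x : GV n} :
    hatAdj n (some x) none = False := rfl

lemma hat_adj_some {n : ℕ} {x y : GV n} :
    (hatGtree n).Adj (some x) (some y) ↔ (Gtree n).Adj x y := by
  rw [gtree_adj]
  simp only [hatGtree, SimpleGraph.fromRel_adj, ne_eq, Option.some.injEq,
    hatAdj_some_some]

lemma hat_adj_none {n : ℕ} {x : GV n} :
    (hatGtree n).Adj none (some x) ↔ x = rootV n := by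
  simp only [hatGtree, SimpleGraph.fromRel_adj, ne_eq, hatAdj_none_some,
    hatAdj_some_none]
  constructor
  · rintro ⟨hne, h | h⟩
    · exact h
    · exact h.elim
  · rintro rfl
    exact ⟨by simp, Or.inl rfl⟩

lemma not_hat_adj_none_none {n : ℕ} : ¬ (hatGtree n).Adj (none : Option (GV n)) none :=
  fun h => h.ne rfl

/-! ### The key predicates -/

/-- There is a fort of `G_{n+1}` avoiding both the root and `S`. -/
def Pp (n : ℕ) (S : Set (GV n)) : Prop :=
  ∃ F : Set (GV n), FortCond (Gtree n) F ∧ F.Nonempty ∧ Disjoint F S ∧ rootV n ∉ F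

/-- There is a fort of `G_{n+1}` containing the root and avoiding `S`. -/
def Qp (n : ℕ) (S : Set (GV n)) : Prop :=
  ∃ F : Set (GV n), FortCond (Gtree n) F ∧ F.Nonempty ∧ Disjoint F S ∧ rootV n ∈ F

/-! ### Lifting constructions -/

/-- A fort avoiding the root in one copy lifts to the next level. -/
lemma lift_single {n : ℕ} (b c : Bool) {S : Set (GV (n+1))}
    (h : Pp n (GV.child b c ⁻¹' S)) : Pp (n+1) S := by
  obtain ⟨F₀, hFC, ⟨z, hz⟩, hdisj, hroot⟩ := h
  refine ⟨GV.child b c '' F₀, ?_, ⟨GV.child b c z, ⟨z, hz, rfl⟩⟩, ?_, ?_⟩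
  · rintro v hv u ⟨u₀, hu₀, rfl⟩ hadj
    cases v with
    | root => exact (not_adj_child_root hadj.symm).elim
    | mid b' =>
      obtain ⟨rfl, rfl⟩ := adj_mid_child.1 hadj
      exact absurd hu₀ hroot
    | child b'' c'' v₀ =>
      obtain ⟨rfl, rfl, hadj₀⟩ := adj_child_child.1 hadj
      have hv₀ : v₀ ∉ F₀ := fun hmem => hv ⟨v₀, hmem, rfl⟩
      obtain ⟨w₀, hw₀, hwne, hwadj⟩ := hFC v₀ hv₀ u₀ hu₀ hadj₀
      exact ⟨GV.child _ _ w₀, ⟨w₀, hw₀, rfl⟩,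
        fun hc => hwne (by simpa [GV.child.injEq] using hc),
        adj_child_child.2 ⟨rfl, rfl, hwadj⟩⟩
  · rw [Set.disjoint_left]
    rintro x ⟨x₀, hx₀, rfl⟩ hxS
    exact (Set.disjoint_left.1 hdisj) hx₀ hxS
  · rintro ⟨x₀, _, hc⟩
    cases n <;> exact absurd hc (by simp [rootV])

/-- Two forts containing the roots of sibling copies lift to a fort avoiding
the root at the next level. -/
lemma lift_pair {n : ℕ} (b : Bool) {S : Set (GV (n+1))} (Fc : Bool → Set (GV n))
    (hFC : ∀ c, FortCond (Gtree n) (Fc c))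
    (hdisj : ∀ c, Disjoint (Fc c) (GV.child b c ⁻¹' S))
    (hroot : ∀ c, rootV n ∈ Fc c) : Pp (n+1) S := by
  refine ⟨⋃ c, GV.child b c '' Fc c, ?_, ⟨GV.child b false (rootV n),
      Set.mem_iUnion.2 ⟨false, ⟨_, hroot false, rfl⟩⟩⟩, ?_, ?_⟩
  · rintro v hv u hu hadj
    obtain ⟨cc, u₀, hu₀, rfl⟩ : ∃ cc u₀, u₀ ∈ Fc cc ∧ GV.child b cc u₀ = u := by
      obtain ⟨_, ⟨cc, rfl⟩, u₀, hu₀, rfl⟩ := hu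
      exact ⟨cc, u₀, hu₀, rfl⟩
    cases v with
    | root => exact (not_adj_child_root hadj.symm).elim
    | mid b' =>
      obtain ⟨rfl, rfl⟩ := adj_mid_child.1 hadj
      refine ⟨GV.child _ (!cc) (rootV n), Set.mem_iUnion.2 ⟨!cc, ⟨_, hroot _, rfl⟩⟩,
        fun hc => ?_, adj_mid_child.2 ⟨rfl, rfl⟩⟩
      simp only [GV.child.injEq] at hc
      simp at hc
    | child b'' c'' v₀ =>
      obtain ⟨rfl, rfl, hadj₀⟩ := adj_child_child.1 hadj
      have hv₀ : v₀ ∉ Fc _ := fun hmem => hv (Set.mem_iUnion.2 ⟨_, ⟨v₀, hmem, rfl⟩⟩)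
      obtain ⟨w₀, hw₀, hwne, hwadj⟩ := hFC _ v₀ hv₀ u₀ hu₀ hadj₀
      exact ⟨GV.child _ _ w₀, Set.mem_iUnion.2 ⟨_, ⟨w₀, hw₀, rfl⟩⟩,
        fun hc => hwne (by simpa [GV.child.injEq] using hc),
        adj_child_child.2 ⟨rfl, rfl, hwadj⟩⟩
  · rw [Set.disjoint_left]
    rintro x hx hxS
    obtain ⟨_, ⟨cc, rfl⟩, x₀, hx₀, rfl⟩ := hx
    exact (Set.disjoint_left.1 (hdisj cc)) hx₀ hxS
  · intro hc
    obtain ⟨_, ⟨cc, rfl⟩, x₀, _, hx⟩ := hc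
    exact absurd hx (by simp [rootV])

/-- Two forts containing the roots of copies on opposite sides, together with the
root, lift to a fort containing the root at the next level. -/
lemma lift_crown {n : ℕ} {S : Set (GV (n+1))} (cs : Bool → Bool) (Fb : Bool → Set (GV n))
    (hFC : ∀ b, FortCond (Gtree n) (Fb b))
    (hdisj : ∀ b, Disjoint (Fb b) (GV.child b (cs b) ⁻¹' S))
    (hroot : ∀ b, rootV n ∈ Fb b) (hrS : (GV.root : GV (n+1)) ∉ S) :
    Qp (n+1) S := by
  refine ⟨{GV.root} ∪ ⋃ b, GV.child b (cs b) '' Fb b, ?_, ⟨GV.root, Or.inl rfl⟩, ?_,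
    Or.inl rfl⟩
  · rintro v hv u hu hadj
    have hvroot : v ≠ GV.root := fun hc => hv (hc ▸ Or.inl rfl)
    cases v with
    | root => exact absurd rfl hvroot
    | mid b' =>
      rcases hu with hu | hu
      · -- u = root; second neighbor: the root of the copy below `mid b'`
        refine ⟨GV.child b' (cs b') (rootV n),
          Or.inr (Set.mem_iUnion.2 ⟨b', ⟨_, hroot _, rfl⟩⟩), fun hc => ?_,
          adj_mid_child.2 ⟨rfl, rfl⟩⟩
        rw [hu] at hc
        exact absurd hc (by simp)
      · -- u is a copy root; second neighbor: the root
        obtain ⟨_, ⟨bb, rfl⟩, u₀, hu₀, rfl⟩ := hu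
        refine ⟨GV.root, Or.inl rfl, by simp, ((Gtree _).adj_comm ..).1 adj_root_mid⟩
    | child b'' c'' v₀ =>
      rcases hu with hu | hu
      · rw [hu] at hadj
        exact absurd hadj not_adj_child_root
      · obtain ⟨_, ⟨bb, rfl⟩, u₀, hu₀, rfl⟩ := hu
        obtain ⟨rfl, rfl, hadj₀⟩ := adj_child_child.1 hadj
        have hv₀ : v₀ ∉ Fb _ := fun hmem =>
          hv (Or.inr (Set.mem_iUnion.2 ⟨_, ⟨v₀, hmem, rfl⟩⟩))
        obtain ⟨w₀, hw₀, hwne, hwadj⟩ := hFC _ v₀ hv₀ u₀ hu₀ hadj₀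
        exact ⟨GV.child _ _ w₀, Or.inr (Set.mem_iUnion.2 ⟨_, ⟨w₀, hw₀, rfl⟩⟩),
          fun hc => hwne (by simpa [GV.child.injEq] using hc),
          adj_child_child.2 ⟨rfl, rfl, hwadj⟩⟩
        
  · rw [Set.disjoint_left]
    rintro x (rfl | hx) hxS
    · exact hrS hxS
    · obtain ⟨_, ⟨bb, rfl⟩, x₀, hx₀, rfl⟩ := hx
      exact (Set.disjoint_left.1 (hdisj bb)) hx₀ hxS

/-! ### Lifting to the hat graph -/

/-- A fort avoiding the root lifts to the hat graph. -/
lemma hat_lift_P {n : ℕ} {S : Set (Option (GV n))} (h : Pp n (some ⁻¹' S)) :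
    ∃ F : Set (Option (GV n)), FortCond (hatGtree n) F ∧ F.Nonempty ∧ Disjoint F S := by
  obtain ⟨F₀, hFC, ⟨z, hz⟩, hdisj, hroot⟩ := h
  refine ⟨some '' F₀, ?_, ⟨some z, ⟨z, hz, rfl⟩⟩, ?_⟩
  · rintro v hv u ⟨u₀, hu₀, rfl⟩ hadj
    cases v with
    | none =>
      rw [hat_adj_none] at hadj
      exact absurd (hadj ▸ hu₀) hroot
    | some v₀ =>
      rw [hat_adj_some] at hadj
      have hv₀ : v₀ ∉ F₀ := fun hmem => hv ⟨v₀, hmem, rfl⟩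
      obtain ⟨w₀, hw₀, hwne, hwadj⟩ := hFC v₀ hv₀ u₀ hu₀ hadj
      exact ⟨some w₀, ⟨w₀, hw₀, rfl⟩, fun hc => hwne (by simpa using hc),
        hat_adj_some.2 hwadj⟩
  · rw [Set.disjoint_left]
    rintro x ⟨x₀, hx₀, rfl⟩ hxS
    exact (Set.disjoint_left.1 hdisj) hx₀ hxS

/-- A fort containing the root lifts (together with the pendant) to the hat graph. -/
lemma hat_lift_Q {n : ℕ} {S : Set (Option (GV n))} (h : Qp n (some ⁻¹' S))
    (hnone : none ∉ S) :
    ∃ F : Set (Option (GV n)), FortCond (hatGtree n) F ∧ F.Nonempty ∧ Disjoint F S := by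
  obtain ⟨F₀, hFC, ⟨z, hz⟩, hdisj, hroot⟩ := h
  refine ⟨{none} ∪ some '' F₀, ?_, ⟨none, Or.inl rfl⟩, ?_⟩
  · rintro v hv u hu hadj
    cases v with
    | none => exact absurd (Or.inl rfl) hv
    | some v₀ =>
      have hv₀ : v₀ ∉ F₀ := fun hmem => hv (Or.inr ⟨v₀, hmem, rfl⟩)
      rcases hu with rfl | ⟨u₀, hu₀, rfl⟩
      · -- u = none, so v₀ = rootV n ∈ F₀, contradiction
        rw [(hatGtree n).adj_comm, hat_adj_none] at hadj
        exact absurd (hadj ▸ hroot) hv₀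
      · rw [hat_adj_some] at hadj
        obtain ⟨w₀, hw₀, hwne, hwadj⟩ := hFC v₀ hv₀ u₀ hu₀ hadj
        exact ⟨some w₀, Or.inr ⟨w₀, hw₀, rfl⟩, fun hc => hwne (by simpa using hc),
          hat_adj_some.2 hwadj⟩
  · rw [Set.disjoint_left]
    rintro x (rfl | ⟨x₀, hx₀, rfl⟩) hxS
    · exact hnone hxS
    · exact (Set.disjoint_left.1 hdisj) hx₀ hxS

/-! ### The base case -/

instance (i j : Fin 5) : Decidable (subK4Rel i j) :=
  decidable_of_iff ((i, j) ∈ [((0 : Fin 5), (3 : Fin 5)), (3, 1), (0, 2), (2, 1), (0, 4),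
    (4, 1), (2, 4)]) Iff.rfl

/-- Subsets of `GV 0` given by a list of indices. -/
def bset (L : List (Fin 5)) : Set (GV 0) := fun v => match v with | .base i => i ∈ L

lemma mem_bset {L : List (Fin 5)} {i : Fin 5} : GV.base i ∈ bset L ↔ i ∈ L := Iff.rfl

lemma fortCond_bset (L : List (Fin 5))
    (h : ∀ i j : Fin 5, i ∉ L → j ∈ L → (i ≠ j ∧ (subK4Rel i j ∨ subK4Rel j i)) →
      ∃ k ∈ L, k ≠ j ∧ (i ≠ k ∧ (subK4Rel i k ∨ subK4Rel k i))) :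
    FortCond (Gtree 0) (bset L) := by
  rintro v hv u hu hadj
  cases v with | base i =>
  cases u with | base j =>
  obtain ⟨k, hk, hkj, hik⟩ := h i j hv hu (adj_base.1 hadj)
  exact ⟨GV.base k, hk, by simp [GV.base.injEq, hkj], adj_base.2 hik⟩

lemma base_ne {i j : Fin 5} (h : i ≠ j) : GV.base i ≠ GV.base j :=
  fun hc => h (by injection hc)

lemma base_main (S : Set (GV 0)) :
    ((S \ {rootV 0}).ncard ≤ tseq 0 - 1 → Pp 0 S) ∧
    (S.ncard ≤ tseq 0 → Pp 0 S ∨ Qp 0 S) := by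
  have fort1 : FortCond (Gtree 0) (bset [0,1]) := fortCond_bset _ (by decide)
  have fort2 : FortCond (Gtree 0) (bset [2,4]) := fortCond_bset _ (by decide)
  by_cases h1 : Disjoint (bset [0,1]) S
  · have hP : Pp 0 S := ⟨bset [0,1], fort1, ⟨GV.base 0, mem_bset.2 (by decide)⟩, h1,
      fun hc => (by decide : ¬ ((3 : Fin 5) ∈ ([0,1] : List (Fin 5)))) hc⟩
    exact ⟨fun _ => hP, fun _ => Or.inl hP⟩
  by_cases h2 : Disjoint (bset [2,4]) S
  · have hP : Pp 0 S := ⟨bset [2,4], fort2, ⟨GV.base 2, mem_bset.2 (by decide)⟩, h2,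
      fun hc => (by decide : ¬ ((3 : Fin 5) ∈ ([2,4] : List (Fin 5)))) hc⟩
    exact ⟨fun _ => hP, fun _ => Or.inl hP⟩
  obtain ⟨x, hx1, hxS⟩ := Set.not_disjoint_iff.1 h1
  obtain ⟨y, hy2, hyS⟩ := Set.not_disjoint_iff.1 h2
  cases x with | base i =>
  cases y with | base j =>
  have hi : i = 0 ∨ i = 1 := by
    have h : i ∈ ([0,1] : List (Fin 5)) := hx1
    simpa using h
  have hj : j = 2 ∨ j = 4 := by
    have h : j ∈ ([2,4] : List (Fin 5)) := hy2
    simpa using h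
  have hij : i ≠ j := by rcases hi with rfl | rfl <;> rcases hj with rfl | rfl <;> decide
  have hi3 : i ≠ 3 := by rcases hi with rfl | rfl <;> decide
  have hj3 : j ≠ 3 := by rcases hj with rfl | rfl <;> decide
  constructor
  · intro hcard
    exfalso
    have hsub : ({GV.base i, GV.base j} : Set (GV 0)) ⊆ S \ {rootV 0} := by
      rintro z (rfl | rfl)
      · exact ⟨hxS, fun hc => hi3 (by injection hc)⟩
      · exact ⟨hyS, fun hc => hj3 (by injection hc)⟩
    have h2le : 2 ≤ (S \ {rootV 0}).ncard := by
      rw [← Set.ncard_pair (base_ne hij)]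
      exact Set.ncard_le_ncard hsub (Set.toFinite _)
    rw [show tseq 0 = 2 from rfl] at hcard
    omega
  · intro hcard
    have hsub : ({GV.base i, GV.base j} : Set (GV 0)) ⊆ S := by
      rintro z (rfl | rfl) <;> assumption
    have hSeq : ({GV.base i, GV.base j} : Set (GV 0)) = S :=
      Set.eq_of_subset_of_ncard_le hsub
        (by rw [Set.ncard_pair (base_ne hij)]; exact hcard) (Set.toFinite _)
    refine Or.inr ?_
    have key : ∀ L : List (Fin 5), FortCond (Gtree 0) (bset L) → (3 : Fin 5) ∈ L →
        i ∉ L → j ∉ L → Qp 0 S := by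
      intro L hLf hL3 hiL hjL
      refine ⟨bset L, hLf, ⟨GV.base 3, mem_bset.2 hL3⟩, ?_, mem_bset.2 hL3⟩
      rw [← hSeq, Set.disjoint_right]
      rintro z (rfl | rfl) <;> assumption
    rcases hi with rfl | rfl <;> rcases hj with rfl | rfl
    · exact key [3,1,4] (fortCond_bset _ (by decide)) (by decide) (by decide) (by decide)
    · exact key [3,1,2] (fortCond_bset _ (by decide)) (by decide) (by decide) (by decide)
    · exact key [3,0,4] (fortCond_bset _ (by decide)) (by decide) (by decide) (by decide)
    · exact key [3,0,2] (fortCond_bset _ (by decide)) (by decide) (by decide) (by decide)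

/-! ### Cardinality bookkeeping -/

lemma child_injective {n : ℕ} (b c : Bool) :
    Function.Injective (GV.child b c : GV n → GV (n+1)) := by
  intro x y h
  injection h

lemma card_split (n : ℕ) (S : Set (GV (n+1))) :
    (GV.child false false ⁻¹' S).ncard + (GV.child false true ⁻¹' S).ncard +
      (GV.child true false ⁻¹' S).ncard + (GV.child true true ⁻¹' S).ncard +
      (S ∩ {GV.root}).ncard ≤ S.ncard := by
  classical
  have hA : ∀ b c : Bool, (GV.child b c '' (GV.child b c ⁻¹' S)).ncard =
      (GV.child b c ⁻¹' S).ncard :=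
    fun b c => Set.ncard_image_of_injective _ (child_injective b c)
  set A : Bool → Bool → Set (GV (n+1)) := fun b c => GV.child b c '' (GV.child b c ⁻¹' S)
    with hAdef
  have hdisj : ∀ b c b' c' : Bool, (b, c) ≠ (b', c') → Disjoint (A b c) (A b' c') := by
    intro b c b' c' hne
    rw [Set.disjoint_left]
    rintro z ⟨x, _, rfl⟩ ⟨y, _, hy⟩
    simp only [GV.child.injEq] at hy
    exact hne (by simp [hy.1, hy.2.1])
  have hdisjR : ∀ b c : Bool, Disjoint (A b c) (S ∩ {GV.root}) := by
    intro b c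
    rw [Set.disjoint_left]
    rintro z ⟨x, _, rfl⟩ ⟨_, hz⟩
    simp only [Set.mem_singleton_iff] at hz
    cases hz
  have hsub : A false false ∪ A false true ∪ A true false ∪ A true true ∪ (S ∩ {GV.root})
      ⊆ S := by
    rintro z hz
    rcases hz with ((((⟨x, hx, rfl⟩ | ⟨x, hx, rfl⟩) | ⟨x, hx, rfl⟩) | ⟨x, hx, rfl⟩) | ⟨hz, _⟩)
    · exact hx
    · exact hx
    · exact hx
    · exact hx
    · exact hz
  have e1 : (A false false ∪ A false true).ncard = (A false false).ncard +
      (A false true).ncard :=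
    Set.ncard_union_eq (hdisj _ _ _ _ (by simp)) (Set.toFinite _) (Set.toFinite _)
  have e2 : (A false false ∪ A false true ∪ A true false).ncard =
      (A false false ∪ A false true).ncard + (A true false).ncard :=
    Set.ncard_union_eq (by
      rw [Set.disjoint_union_left]
      exact ⟨hdisj _ _ _ _ (by simp), hdisj _ _ _ _ (by simp)⟩)
      (Set.toFinite _) (Set.toFinite _)
  have e3 : (A false false ∪ A false true ∪ A true false ∪ A true true).ncard =
      (A false false ∪ A false true ∪ A true false).ncard + (A true true).ncard :=
    Set.ncard_union_eq (by
      rw [Set.disjoint_union_left, Set.disjoint_union_left]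
      exact ⟨⟨hdisj _ _ _ _ (by simp), hdisj _ _ _ _ (by simp)⟩, hdisj _ _ _ _ (by simp)⟩)
      (Set.toFinite _) (Set.toFinite _)
  have e4 : (A false false ∪ A false true ∪ A true false ∪ A true true
      ∪ (S ∩ {GV.root})).ncard =
      (A false false ∪ A false true ∪ A true false ∪ A true true).ncard +
        (S ∩ {GV.root}).ncard :=
    Set.ncard_union_eq (by
      rw [Set.disjoint_union_left, Set.disjoint_union_left, Set.disjoint_union_left]
      exact ⟨⟨⟨hdisjR _ _, hdisjR _ _⟩, hdisjR _ _⟩, hdisjR _ _⟩)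
      (Set.toFinite _) (Set.toFinite _)
  have := Set.ncard_le_ncard hsub (Set.toFinite _)
  rw [e4, e3, e2, e1, hA, hA, hA, hA] at this
  omega

lemma tseq_two_le (n : ℕ) : 2 ≤ tseq n := by
  induction n with
  | zero => simp [tseq]
  | succ n ih => unfold tseq; omega

/-! ### The main induction -/

lemma main_induction (n : ℕ) (S : Set (GV n)) :
    ((S \ {rootV n}).ncard ≤ tseq n - 1 → Pp n S) ∧
    (S.ncard ≤ tseq n → Pp n S ∨ Qp n S) := by
  induction n with
  | zero => exact base_main S
  | succ n ih =>
    have ht2 : 2 ≤ tseq n := tseq_two_le n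
    -- a single light copy gives a global P-fort
    have hP_of_copy : ∀ b c : Bool, (GV.child b c ⁻¹' S).ncard ≤ tseq n - 1 →
        Pp (n+1) S := by
      intro b c h
      refine lift_single b c ((ih _).1 ?_)
      exact le_trans (Set.ncard_le_ncard Set.diff_subset (Set.toFinite _)) h
    -- two medium sibling copies give a global P-fort or two Q-forts, hence a P-fort
    have side_pair : ∀ b : Bool, (GV.child b false ⁻¹' S).ncard ≤ tseq n →
        (GV.child b true ⁻¹' S).ncard ≤ tseq n → Pp (n+1) S := by
      intro b h0 h1
      rcases (ih _).2 h0 with hP | ⟨F0, hF0, hne0, hd0, hr0⟩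
      · exact lift_single b false hP
      rcases (ih _).2 h1 with hP | ⟨F1, hF1, hne1, hd1, hr1⟩
      · exact lift_single b true hP
      refine lift_pair b (fun c => bif c then F1 else F0) ?_ ?_ ?_
      · intro c; cases c
        · exact hF0
        · exact hF1
      · intro c; cases c
        · exact hd0
        · exact hd1
      · intro c; cases c
        · exact hr0
        · exact hr1
    -- one medium copy on each side plus the root give a Q-fort
    have crown : ∀ c0 c1 : Bool, (GV.child false c0 ⁻¹' S).ncard ≤ tseq n →
        (GV.child true c1 ⁻¹' S).ncard ≤ tseq n → (GV.root : GV (n+1)) ∉ S →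
        Pp (n+1) S ∨ Qp (n+1) S := by
      intro c0 c1 h0 h1 hr
      rcases (ih _).2 h0 with hP | ⟨F0, hF0, hne0, hd0, hr0⟩
      · exact Or.inl (lift_single _ _ hP)
      rcases (ih _).2 h1 with hP | ⟨F1, hF1, hne1, hd1, hr1⟩
      · exact Or.inl (lift_single _ _ hP)
      refine Or.inr (lift_crown (fun b => bif b then c1 else c0)
        (fun b => bif b then F1 else F0) ?_ ?_ ?_ hr)
      · intro b; cases b
        · exact hF0
        · exact hF1
      · intro b; cases b
        · exact hd0
        · exact hd1
      · intro b; cases b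
        · exact hr0
        · exact hr1
    constructor
    · -- statement (1)
      intro hcard
      have hroot : rootV (n+1) = (GV.root : GV (n+1)) := rfl
      rw [hroot] at hcard
      have htsucc : tseq (n+1) = 4 * tseq n + 2 := rfl
      rw [htsucc] at hcard
      have hpre : ∀ b c : Bool, GV.child b c ⁻¹' (S \ {GV.root}) = GV.child b c ⁻¹' S := by
        intro b c
        ext x
        simp only [Set.mem_preimage, Set.mem_diff, Set.mem_singleton_iff,
          and_iff_left_iff_imp]
        intro _ hc
        cases hc
      have hsplit := card_split n (S \ {GV.root})
      rw [hpre, hpre, hpre, hpre] at hsplit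
      by_cases c00 : (GV.child false false ⁻¹' S).ncard ≤ tseq n - 1
      · exact hP_of_copy _ _ c00
      by_cases c01 : (GV.child false true ⁻¹' S).ncard ≤ tseq n - 1
      · exact hP_of_copy _ _ c01
      by_cases c10 : (GV.child true false ⁻¹' S).ncard ≤ tseq n - 1
      · exact hP_of_copy _ _ c10
      by_cases c11 : (GV.child true true ⁻¹' S).ncard ≤ tseq n - 1
      · exact hP_of_copy _ _ c11
      have hchoice : ((GV.child false false ⁻¹' S).ncard ≤ tseq n ∧
          (GV.child false true ⁻¹' S).ncard ≤ tseq n) ∨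
          ((GV.child true false ⁻¹' S).ncard ≤ tseq n ∧
          (GV.child true true ⁻¹' S).ncard ≤ tseq n) := by omega
      rcases hchoice with ⟨h0, h1⟩ | ⟨h0, h1⟩
      · exact side_pair false h0 h1
      · exact side_pair true h0 h1
    · -- statement (3)
      intro hcard
      have htsucc : tseq (n+1) = 4 * tseq n + 2 := rfl
      rw [htsucc] at hcard
      have hsplit := card_split n S
      by_cases c00 : (GV.child false false ⁻¹' S).ncard ≤ tseq n - 1
      · exact Or.inl (hP_of_copy _ _ c00)
      by_cases c01 : (GV.child false true ⁻¹' S).ncard ≤ tseq n - 1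
      · exact Or.inl (hP_of_copy _ _ c01)
      by_cases c10 : (GV.child true false ⁻¹' S).ncard ≤ tseq n - 1
      · exact Or.inl (hP_of_copy _ _ c10)
      by_cases c11 : (GV.child true true ⁻¹' S).ncard ≤ tseq n - 1
      · exact Or.inl (hP_of_copy _ _ c11)
      by_cases side0 : (GV.child false false ⁻¹' S).ncard ≤ tseq n ∧
          (GV.child false true ⁻¹' S).ncard ≤ tseq n
      · exact Or.inl (side_pair false side0.1 side0.2)
      by_cases side1 : (GV.child true false ⁻¹' S).ncard ≤ tseq n ∧
          (GV.child true true ⁻¹' S).ncard ≤ tseq n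
      · exact Or.inl (side_pair true side1.1 side1.2)
      -- each side has a heavy copy; the root is not in S
      have hrootS : (GV.root : GV (n+1)) ∉ S := by
        intro hr
        have : (S ∩ {GV.root}).ncard = 1 := by
          have : S ∩ {GV.root} = {GV.root} := by
            apply Set.eq_singleton_iff_unique_mem.2
            exact ⟨⟨hr, rfl⟩, fun x hx => hx.2⟩
          rw [this, Set.ncard_singleton]
        omega
      have hc0 : (GV.child false false ⁻¹' S).ncard ≤ tseq n ∨
          (GV.child false true ⁻¹' S).ncard ≤ tseq n := by omega
      have hc1 : (GV.child true false ⁻¹' S).ncard ≤ tseq n ∨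
          (GV.child true true ⁻¹' S).ncard ≤ tseq n := by omega
      rcases hc0 with h0 | h0 <;> rcases hc1 with h1 | h1
      · exact crown false false h0 h1 hrootS
      · exact crown false true h0 h1 hrootS
      · exact crown true false h0 h1 hrootS
      · exact crown true true h0 h1 hrootS

/-! ### Conclusion for the hat graph -/

lemma hat_main (n : ℕ) (S : Set (Option (GV n))) (hcard : S.ncard ≤ tseq n) :
    ∃ F : Set (Option (GV n)), FortCond (hatGtree n) F ∧ F.Nonempty ∧ Disjoint F S := by
  classical
  set S₀ : Set (GV n) := some ⁻¹' S with hS₀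
  have himg : (some '' S₀).ncard = S₀.ncard :=
    Set.ncard_image_of_injective _ (Option.some_injective _)
  by_cases hnone : none ∈ S
  · -- the pendant vertex is in S: use a root-avoiding fort
    have hsub : {none} ∪ some '' S₀ ⊆ S := by
      rintro z (rfl | ⟨x, hx, rfl⟩)
      · exact hnone
      · exact hx
    have hcard2 : 1 + S₀.ncard ≤ S.ncard := by
      have hu : ({none} ∪ some '' S₀).ncard = 1 + S₀.ncard := by
        rw [Set.ncard_union_eq (by
          rw [Set.disjoint_left]
          rintro z rfl ⟨x, _, hx⟩
          cases hx) (Set.toFinite _) (Set.toFinite _),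
          Set.ncard_singleton, himg]
      rw [← hu]
      exact Set.ncard_le_ncard hsub (Set.toFinite _)
    have h1 : (S₀ \ {rootV n}).ncard ≤ tseq n - 1 := by
      have := Set.ncard_le_ncard (Set.diff_subset (s := S₀) (t := {rootV n}))
        (Set.toFinite _)
      omega
    exact hat_lift_P ((main_induction n S₀).1 h1)
  · -- the pendant vertex is not in S
    have h1 : S₀.ncard ≤ tseq n := by
      have hsub : some '' S₀ ⊆ S := by rintro z ⟨x, hx, rfl⟩; exact hx
      have := Set.ncard_le_ncard hsub (Set.toFinite _)
      omega
    rcases (main_induction n S₀).2 h1 with hP | hQ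
    · exact hat_lift_P hP
    · exact hat_lift_Q hQ hnone

lemma zfs_lower (n : ℕ) (S : Set (Option (GV n))) (h : IsZeroForcingSet (hatGtree n) S) :
    tseq n + 1 ≤ S.ncard := by
  by_contra hlt
  push_neg at hlt
  obtain ⟨F, hFC, hne, hdisj⟩ := hat_main n S (by omega)
  exact not_zfs hFC hne hdisj h

lemma tseq_formula (n : ℕ) : 3 * (tseq n + 1) = 8 * 4 ^ n + 1 := by
  induction n with
  | zero => rfl
  | succ n ih =>
    have : tseq (n+1) = 4 * tseq n + 2 := rfl
    rw [this, pow_succ]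
    omega

/-- `Z(Ĝ_{n+1}) ≥ t_{n+1} + 1`, hence `Z(Ĝ_{n+1}) ≥ (4/9)|V(Ĝ_{n+1})|`; more
precisely `Z(Ĝ_{n+1}) ≥ (4/9 + 1/(18 · 4^n)) |V(Ĝ_{n+1})|`. -/
theorem zeroForcingNumber_hatGtree_lower (n : ℕ) :
    tseq n + 1 ≤ zeroForcingNumber (hatGtree n) ∧
    (4 / 9 : ℚ) * Nat.card (Option (GV n)) ≤ zeroForcingNumber (hatGtree n) ∧
    (4 / 9 + 1 / (18 * 4 ^ n) : ℚ) * Nat.card (Option (GV n)) ≤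
      zeroForcingNumber (hatGtree n) := by
  have h1 : tseq n + 1 ≤ zeroForcingNumber (hatGtree n) := by
    apply le_csInf
    · exact ⟨(Set.univ : Set (Option (GV n))).ncard, Set.univ, rfl,
        fun v => ZFClosure.init v (Set.mem_univ v)⟩
    · rintro k ⟨S, rfl, hZ⟩
      exact zfs_lower n S hZ
  have hN : ((Nat.card (Option (GV n)) : ℚ)) = 6 * 4 ^ n := by
    rw [card_option_gv]; push_cast; ring
  have h3 : (3 : ℚ) * ((tseq n : ℚ) + 1) = 8 * 4 ^ n + 1 := by
    have h := congrArg (fun k : ℕ => (k : ℚ)) (tseq_formula n)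
    push_cast at h
    linarith
  have hkey : (4 / 9 + 1 / (18 * 4 ^ n) : ℚ) * (Nat.card (Option (GV n))) =
      (tseq n : ℚ) + 1 := by
    rw [hN]
    have h4 : ((4 : ℚ)) ^ n ≠ 0 := by positivity
    field_simp
    linear_combination (-54 : ℚ) * h3
  have hsharp : (4 / 9 + 1 / (18 * 4 ^ n) : ℚ) * Nat.card (Option (GV n)) ≤
      zeroForcingNumber (hatGtree n) := by
    rw [hkey]
    have : ((tseq n + 1 : ℕ) : ℚ) ≤ ((zeroForcingNumber (hatGtree n) : ℕ) : ℚ) := by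
      exact_mod_cast h1
    push_cast at this
    linarith
  refine ⟨h1, ?_, hsharp⟩
  refine le_trans ?_ hsharp
  have hpos : (0 : ℚ) ≤ (Nat.card (Option (GV n)) : ℚ) := by positivity
  have hq : (0 : ℚ) ≤ 1 / (18 * 4 ^ n) := by positivity
  nlinarith
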